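/- For all m, n ≥ 1: tr C_{m,n} = Σ_{j=0}^{2n} (−1)ʲ tr( A_{m+j} B_{2n−j} ), all the operators involved having absolutely summable diagonals in the standard basis of ℓ²(VX). -/

import Mathlib

/- Formalization of a statement from "Ihara Zeta functions of infinite weighted graphs"
   (A. Deitmar).  Context: `X` is a connected graph of bounded valency, `w` is a positive
   weight function on oriented edges (darts) with finite total weight. -/

open scoped BigOperators
open SimpleGraph

attribute [local instance 10] Classical.propDecidable
noncomputable local instance (priority := 10) {α : Type*} : DecidableEq α := Classical.decEq _

variable {V : Type*}

/-- The standard basis vector of `ℓ²(ι)` at `i`. -/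
noncomputable def bv {ι : Type*} (i : ι) : lp (fun _ : ι => ℂ) 2 := lp.single 2 i 1

/-- For adjacent vertices `x, y`, `dartW G w h = w(x,y)·w(y,x)`, the weight `W(x,y)` of the
underlying edge. -/
noncomputable def dartW (G : SimpleGraph V) (w : G.Dart → ℝ) {x y : V} (h : G.Adj x y) : ℝ :=
  w ⟨(x, y), h⟩ * w ⟨(y, x), h.symm⟩

/-- A path of length `m` in the graph `G`: a sequence of adjacent vertices
`x₀, x₁, …, x_m` (encoded as a function `ℕ → V` which is constant from index `m` on). -/
structure GPath (G : SimpleGraph V) (m : ℕ) where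
  f : ℕ → V
  adj : ∀ i, i < m → G.Adj (f i) (f (i + 1))
  stable : ∀ i, m ≤ i → f i = f m

/-- The weight `w(p)` of a path: the product of the weights of its oriented edges. -/
noncomputable def GPath.wgt {G : SimpleGraph V} {m : ℕ} (w : G.Dart → ℝ) (p : GPath G m) : ℝ :=
  ∏ i : Fin m, w ⟨(p.f i, p.f (i + 1)), p.adj i i.isLt⟩

/-- A path is reduced (has no backtracking) iff `x_{j-1} ≠ x_{j+1}` for all `j`. -/
def GPath.Reduced {G : SimpleGraph V} {m : ℕ} (p : GPath G m) : Prop :=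
  ∀ i, i + 2 ≤ m → p.f i ≠ p.f (i + 2)

/-- The diagonal of an operator on `ℓ²(ι)` with respect to the standard orthonormal basis
is absolutely summable. -/
def DiagAbsSummable {ι : Type*}
    (S : lp (fun _ : ι => ℂ) 2 →L[ℂ] lp (fun _ : ι => ℂ) 2) : Prop :=
  Summable fun i : ι => ‖S (bv i) i‖

/-- The trace of an operator on `ℓ²(ι)`: the sum of its diagonal matrix entries with
respect to the standard orthonormal basis. -/
noncomputable def diagTr {ι : Type*}
    (S : lp (fun _ : ι => ℂ) 2 →L[ℂ] lp (fun _ : ι => ℂ) 2) : ℂ :=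
  ∑' i : ι, S (bv i) i

namespace GPath

variable {G : SimpleGraph V}

theorem ext' {m : ℕ} {p q : GPath G m} (h : ∀ i, p.f i = q.f i) : p = q := by
  cases p; cases q; simp only [mk.injEq]; exact funext h

/-- the path of length 0 at a vertex -/
def nil (x : V) : GPath G 0 := ⟨fun _ => x, fun i h => by omega, fun _ _ => rfl⟩

theorem eq_nil (p : GPath G 0) : p = nil (p.f 0) :=
  ext' fun i => p.stable i (Nat.zero_le i)

def tail {m : ℕ} (p : GPath G (m + 1)) : GPath G m where
  f := fun i => p.f (i + 1)
  adj := fun i h => p.adj (i + 1) (by omega)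
  stable := fun i h => p.stable (i + 1) (by omega)

@[simp] theorem tail_f {m : ℕ} (p : GPath G (m + 1)) (i : ℕ) : p.tail.f i = p.f (i + 1) := rfl

def cons {m : ℕ} (x : V) (p : GPath G m) (h : G.Adj x (p.f 0)) : GPath G (m + 1) where
  f := fun i => Nat.casesOn i x p.f
  adj := fun i hi => by
    cases i with
    | zero => exact h
    | succ j => exact p.adj j (by omega)
  stable := fun i hi => by
    cases i with
    | zero => omega
    | succ j => exact p.stable j (by omega)

@[simp] theorem cons_f_zero {m : ℕ} (x : V) (p : GPath G m) (h) : (cons x p h).f 0 = x := rfl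
@[simp] theorem cons_f_succ {m : ℕ} (x : V) (p : GPath G m) (h) (i : ℕ) :
    (cons x p h).f (i + 1) = p.f i := rfl

@[simp] theorem cons_f_one {m : ℕ} (x : V) (p : GPath G m) (h) : (cons x p h).f 1 = p.f 0 := rfl

@[simp] theorem tail_cons {m : ℕ} (x : V) (p : GPath G m) (h) : (cons x p h).tail = p :=
  ext' fun i => rfl

theorem cons_tail {m : ℕ} (p : GPath G (m + 1)) :
    cons (p.f 0) p.tail (p.adj 0 (Nat.succ_pos m)) = p :=
  ext' fun i => by cases i <;> rfl

theorem wgt_cons {m : ℕ} (w : G.Dart → ℝ) (x : V) (p : GPath G m) (h) :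
    (cons x p h).wgt w = w ⟨(x, p.f 0), h⟩ * p.wgt w := by
  rw [wgt, Fin.prod_univ_succ]
  rfl

theorem wgt_tail {m : ℕ} (w : G.Dart → ℝ) (p : GPath G (m + 1)) :
    p.wgt w = w ⟨(p.f 0, p.f 1), p.adj 0 (Nat.succ_pos m)⟩ * p.tail.wgt w := by
  conv_lhs => rw [← cons_tail p]
  exact wgt_cons w _ _ _

theorem wgt_pos {m : ℕ} {w : G.Dart → ℝ} (hw : ∀ e, 0 < w e) (p : GPath G m) : 0 < p.wgt w :=
  Finset.prod_pos fun i _ => hw _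

theorem wgt_nonneg {m : ℕ} {w : G.Dart → ℝ} (hw : ∀ e, 0 < w e) (p : GPath G m) : 0 ≤ p.wgt w :=
  (wgt_pos hw p).le

/-- splitting off the first edge -/
noncomputable def consEquiv {m : ℕ} (x : V) :
    {p : GPath G (m + 1) // p.f 0 = x} ≃ (x' : G.neighborSet x) × {p : GPath G m // p.f 0 = x'.1} where
  toFun p := ⟨⟨p.1.f 1, by have := p.1.adj 0 (Nat.succ_pos m); rwa [p.2] at this⟩, p.1.tail, rfl⟩
  invFun q := ⟨cons x q.2.1 (by rw [q.2.2]; exact q.1.2), rfl⟩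
  left_inv := by
    rintro ⟨p, rfl⟩
    apply Subtype.ext
    exact GPath.ext' fun i => by cases i <;> rfl
  right_inv := by
    rintro ⟨⟨x', hx'⟩, p, hp⟩
    change p.f 0 = x' at hp
    subst hp
    rfl

end GPath

section Fin

variable {G : SimpleGraph V} (hfin : ∀ x : V, (G.neighborSet x).Finite)
include hfin

theorem finite_pall : ∀ (m : ℕ) (x : V), Finite {p : GPath G m // p.f 0 = x} := by
  intro m
  induction m with
  | zero =>
    intro x
    have : Subsingleton {p : GPath G 0 // p.f 0 = x} := by
      constructor
      intro p q
      apply Subtype.ext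
      apply GPath.ext'
      intro i
      rw [p.1.stable i (Nat.zero_le i), q.1.stable i (Nat.zero_le i)]
      rw [show p.1.f 0 = x from p.2, show q.1.f 0 = x from q.2]
    infer_instance
  | succ m ih =>
    intro x
    have : Finite (G.neighborSet x) := hfin x
    have : ∀ x' : G.neighborSet x, Finite {p : GPath G m // p.f 0 = x'.1} := fun x' => ih x'
    exact Finite.of_equiv _ (GPath.consEquiv x).symm

theorem finite_pt (m : ℕ) (x y : V) :
    Finite {p : GPath G m // p.Reduced ∧ p.f 0 = x ∧ p.f m = y} := by
  have := finite_pall hfin m x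
  exact Finite.of_injective (fun p => (⟨p.1, p.2.2.1⟩ : {p : GPath G m // p.f 0 = x}))
    (fun p q h => Subtype.ext (by simpa using congrArg Subtype.val h))

end Fin

section Sums

variable {G : SimpleGraph V} (w : G.Dart → ℝ)

noncomputable def sg (x : V) : ℝ := ∑' x' : G.neighborSet x, w ⟨(x, x'.1), x'.2⟩

noncomputable def dd (k : ℕ) (x : V) : ℝ := ∑' x' : G.neighborSet x, dartW G w x'.2 ^ k

noncomputable def FF (s : ℕ) (x : V) : ℝ := ∑' p : {p : GPath G s // p.f 0 = x}, p.1.wgt w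

noncomputable def aa (s : ℕ) (x y : V) : ℝ :=
  ∑' p : {p : GPath G s // p.Reduced ∧ p.f 0 = x ∧ p.f s = y}, p.1.wgt w

noncomputable def cc (s k : ℕ) (x : V) : ℝ :=
  ∑' p : {p : GPath G (s + 1) // p.Reduced ∧ p.f 0 = x ∧ p.f (s + 1) = x},
    dartW G w (p.1.adj 0 (Nat.succ_pos s)) ^ k * p.1.wgt w

theorem cc_zero (s : ℕ) (x : V) : cc w s 0 x = aa w (s + 1) x x := by
  simp [cc, aa]

instance unique_pall0 (x : V) : Unique {p : GPath G 0 // p.f 0 = x} where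
  default := ⟨GPath.nil x, rfl⟩
  uniq := fun p => Subtype.ext ((GPath.eq_nil p.1).trans (by rw [p.2]))

theorem FF_zero (x : V) : FF w 0 x = 1 := by
  rw [FF, tsum_eq_single (⟨GPath.nil x, rfl⟩ : {p : GPath G 0 // p.f 0 = x})]
  · simp [GPath.wgt]
  · intro b hb
    exact absurd (Subsingleton.elim b _) hb

variable (hfin : ∀ x : V, (G.neighborSet x).Finite)
include hfin

theorem FF_succ (s : ℕ) (x : V) :
    FF w (s + 1) x = ∑' x' : G.neighborSet x, w ⟨(x, x'.1), x'.2⟩ * FF w s x'.1 := by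
  haveI : Finite (G.neighborSet x) := hfin x
  haveI : ∀ x' : G.neighborSet x, Finite {p : GPath G s // p.f 0 = x'.1} :=
    fun x' => finite_pall hfin s x'.1
  haveI : Finite ((x' : G.neighborSet x) × {p : GPath G s // p.f 0 = x'.1}) := by infer_instance
  rw [FF, ← Equiv.tsum_eq (GPath.consEquiv (G := G) (m := s) x).symm
      (fun p => p.1.wgt w)]
  rw [Summable.tsum_sigma]
  · congr 1
    funext x'
    rw [FF, ← tsum_mul_left]
    congr 1
    funext p
    show (GPath.cons x p.1 (by rw [p.2]; exact x'.2)).wgt w = _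
    rw [GPath.wgt_cons]
    have h2 : p.1.f 0 = x'.1 := p.2
    congr 1
    exact congrArg w (SimpleGraph.Dart.ext _ _ (by show (x, p.1.f 0) = (x, x'.1); rw [h2]))
  · exact .of_finite

end Sums

section Bounds

variable {G : SimpleGraph V} {w : G.Dart → ℝ}

noncomputable def KK (G : SimpleGraph V) (w : G.Dart → ℝ) : ℝ := max 1 (∑' e : G.Dart, w e)

variable (hw : ∀ e, 0 < w e) (hsum : Summable w)

theorem one_le_KK : 1 ≤ KK G w := le_max_left _ _

theorem KK_pos : 0 < KK G w := lt_of_lt_of_le one_pos (one_le_KK)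

include hw hsum in
theorem w_le_KK (e : G.Dart) : w e ≤ KK G w :=
  le_trans (Summable.le_tsum hsum e fun b _ => (hw b).le) (le_max_right _ _)

include hw in
theorem dartW_nonneg {x y : V} (h : G.Adj x y) : 0 ≤ dartW G w h :=
  mul_nonneg (hw _).le (hw _).le

include hw hsum in
theorem dartW_le {x y : V} (h : G.Adj x y) : dartW G w h ≤ KK G w ^ 2 := by
  rw [sq]
  exact mul_le_mul (w_le_KK hw hsum _) (w_le_KK hw hsum _) (hw _).le (KK_pos).le

include hw hsum in
theorem wgt_le_KK {m : ℕ} (p : GPath G m) : p.wgt w ≤ KK G w ^ m := by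
  calc p.wgt w ≤ ∏ _i : Fin m, KK G w :=
        Finset.prod_le_prod (fun i _ => (hw _).le) (fun i _ => w_le_KK hw hsum _)
    _ = KK G w ^ m := by rw [Finset.prod_const, Finset.card_univ, Fintype.card_fin]

include hw in
theorem FF_nonneg (s : ℕ) (x : V) : 0 ≤ FF w s x :=
  tsum_nonneg fun p => GPath.wgt_nonneg hw p.1

include hw in
theorem sg_nonneg (x : V) : 0 ≤ sg w x := tsum_nonneg fun x' => (hw _).le

variable (hfin : ∀ x : V, (G.neighborSet x).Finite)
variable {M : ℝ} (hM : 0 < M) (hcard : ∀ x : V, ((G.neighborSet x).ncard : ℝ) ≤ M)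

include hfin hM hcard hw hsum in
theorem FF_le : ∀ (s : ℕ) (x : V), FF w s x ≤ (M * KK G w) ^ s := by
  intro s
  induction s with
  | zero => intro x; rw [FF_zero, pow_zero]
  | succ s ih =>
    intro x
    rw [FF_succ w hfin s x]
    haveI : Fintype (G.neighborSet x) := (hfin x).fintype
    rw [tsum_fintype]
    have hb : ∀ x' : G.neighborSet x, w ⟨(x, x'.1), x'.2⟩ * FF w s x'.1
        ≤ KK G w * (M * KK G w) ^ s := fun x' =>
      mul_le_mul (w_le_KK hw hsum _) (ih x'.1) (FF_nonneg hw s _) (KK_pos).le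
    calc (∑ x' : G.neighborSet x, w ⟨(x, x'.1), x'.2⟩ * FF w s x'.1)
        ≤ ∑ _x' : G.neighborSet x, KK G w * (M * KK G w) ^ s :=
          Finset.sum_le_sum fun i _ => hb i
      _ = (Fintype.card (G.neighborSet x) : ℝ) * (KK G w * (M * KK G w) ^ s) := by
          rw [Finset.sum_const, Finset.card_univ, nsmul_eq_mul]
      _ ≤ M * (KK G w * (M * KK G w) ^ s) := by
          have hK := KK_pos (G := G) (w := w)
          apply mul_le_mul_of_nonneg_right _
            (mul_nonneg hK.le (pow_nonneg (mul_nonneg hM.le hK.le) s))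
          · have := hcard x
            rwa [Set.ncard_eq_toFinset_card', Set.toFinset_card] at this
      _ = (M * KK G w) ^ (s + 1) := by ring

include hfin hM hcard hw hsum in
theorem FF_le_sg (s : ℕ) (x : V) : FF w (s + 1) x ≤ (M * KK G w) ^ s * sg w x := by
  rw [FF_succ w hfin s x, sg, ← tsum_mul_left]
  haveI : Fintype (G.neighborSet x) := (hfin x).fintype
  rw [tsum_fintype, tsum_fintype]
  apply Finset.sum_le_sum
  intro x' _
  rw [mul_comm ((M * KK G w) ^ s)]
  exact mul_le_mul_of_nonneg_left (FF_le hw hsum hfin hM hcard s x'.1) (hw _).le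

/-- darts are pairs (x, neighbor of x) -/
noncomputable def dartEquiv (G : SimpleGraph V) : (Σ x : V, ↥(G.neighborSet x)) ≃ G.Dart where
  toFun q := ⟨(q.1, q.2.1), q.2.2⟩
  invFun d := ⟨d.toProd.1, d.toProd.2, d.adj⟩
  left_inv q := rfl
  right_inv d := rfl

include hsum in
theorem sg_summable : Summable (sg w (G := G)) := by
  have h : Summable fun q : Σ x : V, ↥(G.neighborSet x) => w (dartEquiv G q) :=
    (Equiv.summable_iff (dartEquiv G)).mpr hsum
  exact h.sigma

end Bounds

section Key

variable {G : SimpleGraph V} {w : G.Dart → ℝ}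

theorem dartW_congr {x y x2 y2 : V} (h : G.Adj x y) (h2 : G.Adj x2 y2) (hx : x = x2)
    (hy : y = y2) : dartW G w h = dartW G w h2 := by subst hx; subst hy; rfl

/-- prepend an edge at `x` to a reduced path: lands in paths reduced away from the start -/
noncomputable def E1 (x : V) (t : ℕ) :
    (Σ x' : ↥(G.neighborSet x),
        {q : GPath G (t + 2) // q.Reduced ∧ q.f 0 = x'.1 ∧ q.f (t + 2) = x}) ≃
    {r : GPath G (t + 3) //
        (∀ i, 1 ≤ i → i + 2 ≤ t + 3 → r.f i ≠ r.f (i + 2)) ∧ r.f 0 = x ∧ r.f (t + 3) = x} where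
  toFun a := ⟨GPath.cons x a.2.1 (by rw [a.2.2.2.1]; exact a.1.2), by
    refine ⟨?_, rfl, a.2.2.2.2⟩
    intro i h1 h2
    match i, h1 with
    | (j + 1), _ => exact a.2.2.1 j (by omega)⟩
  invFun r := ⟨⟨r.1.f 1, by have := r.1.adj 0 (by omega); rwa [r.2.2.1] at this⟩,
    r.1.tail, (fun i hi => r.2.1 (i + 1) (by omega) (by omega)), rfl, r.2.2.2⟩
  left_inv := by
    rintro ⟨⟨x', hx'⟩, q, hred, hq0, hql⟩
    change q.f 0 = x' at hq0
    subst hq0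
    rfl
  right_inv := by
    rintro ⟨r, hpar, hr0, hrl⟩
    apply Subtype.ext
    apply GPath.ext'
    intro i
    cases i with
    | zero => exact hr0.symm
    | succ j => rfl

/-- the reduced ones among "reduced away from the start" -/
noncomputable def E3 (x : V) (t : ℕ) :
    (↥{u : {r : GPath G (t + 3) //
        (∀ i, 1 ≤ i → i + 2 ≤ t + 3 → r.f i ≠ r.f (i + 2)) ∧ r.f 0 = x ∧ r.f (t + 3) = x} |
          u.1.Reduced}) ≃
    {r : GPath G (t + 3) // r.Reduced ∧ r.f 0 = x ∧ r.f (t + 3) = x} where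
  toFun u := ⟨u.1.1, u.2, u.1.2.2.1, u.1.2.2.2⟩
  invFun p := ⟨⟨p.1, fun i _ h => p.2.1 i h, p.2.2.1, p.2.2.2⟩, p.2.1⟩
  left_inv u := rfl
  right_inv p := rfl

/-- the non-reduced ones: remove the back-and-forth at the start -/
noncomputable def E4 (x : V) (t : ℕ) :
    (↥({u : {r : GPath G (t + 3) //
        (∀ i, 1 ≤ i → i + 2 ≤ t + 3 → r.f i ≠ r.f (i + 2)) ∧ r.f 0 = x ∧ r.f (t + 3) = x} |
          u.1.Reduced}ᶜ)) ≃
    (Σ x' : ↥(G.neighborSet x),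
      {q : {q : GPath G (t + 1) // q.Reduced ∧ q.f 0 = x ∧ q.f (t + 1) = x} //
        q.1.f 1 ≠ x'.1}) where
  toFun u := by
    refine ⟨⟨u.1.1.f 1, by have := u.1.1.adj 0 (by omega); rwa [u.1.2.2.1] at this⟩,
      ⟨⟨u.1.1.tail.tail, fun i hi => u.1.2.1 (i + 2) (by omega) (by omega), ?_,
        u.1.2.2.2⟩, (u.1.2.1 1 (by omega) (by omega)).symm⟩⟩
    -- u.1.1.f 2 = x
    show u.1.1.f 2 = x
    by_contra hne
    apply u.2
    intro i h2
    match i with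
    | 0 => rw [u.1.2.2.1]; intro e; exact hne e.symm
    | (j + 1) => exact u.1.2.1 (j + 1) (by omega) (by omega)
  invFun b := ⟨⟨GPath.cons x (GPath.cons b.1.1 b.2.1.1 (by rw [b.2.1.2.2.1]; exact b.1.2.symm))
      b.1.2, by
        refine ⟨?_, rfl, b.2.1.2.2.2⟩
        intro i h1 h2
        match i, h1 with
        | 1, _ => exact (b.2.2).symm
        | (j + 2), _ => exact b.2.1.2.1 j (by omega)⟩, by
        intro hred
        exact hred 0 (by omega) (b.2.1.2.2.1).symm⟩
  left_inv := by
    rintro ⟨⟨r, hpar, hr0, hrl⟩, hnr⟩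
    apply Subtype.ext
    apply Subtype.ext
    apply GPath.ext'
    intro i
    match i with
    | 0 => exact hr0.symm
    | 1 => rfl
    | (j + 2) => rfl
  right_inv := by
    rintro ⟨⟨x', hx'⟩, ⟨q, hred, hq0, hql⟩, hne⟩
    rfl

end Key

section Key2

variable {G : SimpleGraph V} {w : G.Dart → ℝ}

/-- closed paths of positive length are classified by their first edge -/
noncomputable def E5 (x : V) (t : ℕ) :
    (Σ x' : ↥(G.neighborSet x),
      ↥{q : {q : GPath G (t + 1) // q.Reduced ∧ q.f 0 = x ∧ q.f (t + 1) = x} |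
          q.1.f 1 = x'.1}) ≃
    {q : GPath G (t + 1) // q.Reduced ∧ q.f 0 = x ∧ q.f (t + 1) = x} where
  toFun b := b.2.1
  invFun q := ⟨⟨q.1.f 1, by have := q.1.adj 0 (by omega); rwa [q.2.2.1] at this⟩, q, rfl⟩
  left_inv := by
    rintro ⟨⟨x', hx'⟩, q, hq⟩
    change q.1.f 1 = x' at hq
    subst hq
    rfl
  right_inv q := rfl

variable (hfin : ∀ x : V, (G.neighborSet x).Finite)
include hfin

theorem key (t k : ℕ) (x : V) :
    (∑' x' : ↥(G.neighborSet x), dartW G w x'.2 ^ k * w ⟨(x, x'.1), x'.2⟩ * aa w (t + 2) x'.1 x)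
    = cc w (t + 2) k x + (dd w (k + 1) x * aa w (t + 1) x x - cc w t (k + 1) x) := by
  haveI hN : Finite ↥(G.neighborSet x) := hfin x
  haveI h1 : ∀ y z : V, Finite {q : GPath G (t + 2) // q.Reduced ∧ q.f 0 = y ∧ q.f (t + 2) = z} :=
    fun y z => finite_pt hfin _ y z
  haveI h2 : ∀ y z : V, Finite {q : GPath G (t + 1) // q.Reduced ∧ q.f 0 = y ∧ q.f (t + 1) = z} :=
    fun y z => finite_pt hfin _ y z
  haveI hU : Finite {r : GPath G (t + 3) //
      (∀ i, 1 ≤ i → i + 2 ≤ t + 3 → r.f i ≠ r.f (i + 2)) ∧ r.f 0 = x ∧ r.f (t + 3) = x} :=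
    Finite.of_equiv _ (E1 x t)
  -- step 1: pack the LHS as a sum over a sigma type
  have s1 : (∑' x' : ↥(G.neighborSet x),
        dartW G w x'.2 ^ k * w ⟨(x, x'.1), x'.2⟩ * aa w (t + 2) x'.1 x)
      = ∑' a : (Σ x' : ↥(G.neighborSet x),
          {q : GPath G (t + 2) // q.Reduced ∧ q.f 0 = x'.1 ∧ q.f (t + 2) = x}),
          dartW G w a.1.2 ^ k * w ⟨(x, a.1.1), a.1.2⟩ * a.2.1.wgt w := by
    rw [Summable.tsum_sigma (.of_finite)]
    congr 1
    funext x'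
    rw [aa, ← tsum_mul_left]
  -- step 2: transport along E1
  have s2 : (∑' a : (Σ x' : ↥(G.neighborSet x),
          {q : GPath G (t + 2) // q.Reduced ∧ q.f 0 = x'.1 ∧ q.f (t + 2) = x}),
          dartW G w a.1.2 ^ k * w ⟨(x, a.1.1), a.1.2⟩ * a.2.1.wgt w)
      = ∑' r : {r : GPath G (t + 3) //
          (∀ i, 1 ≤ i → i + 2 ≤ t + 3 → r.f i ≠ r.f (i + 2)) ∧ r.f 0 = x ∧ r.f (t + 3) = x},
          dartW G w (r.1.adj 0 (Nat.succ_pos (t + 2))) ^ k * r.1.wgt w := by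
    rw [← Equiv.tsum_eq (E1 x t)
      (fun r => dartW G w (r.1.adj 0 (Nat.succ_pos (t + 2))) ^ k * r.1.wgt w)]
    apply tsum_congr
    rintro ⟨⟨x', hx'⟩, q, hred, hq0, hql⟩
    change q.f 0 = x' at hq0
    subst hq0
    show _ = dartW G w ((GPath.cons x q hx').adj 0 (Nat.succ_pos (t + 2))) ^ k
        * (GPath.cons x q hx').wgt w
    refine Eq.trans ?_ (congrArg (fun z => _ * z) (GPath.wgt_cons w x q hx').symm)
    exact mul_assoc _ _ _
  -- step 3: split according to whether the long path is reduced
  haveI h3 : ∀ y z : V, Finite {q : GPath G (t + 3) // q.Reduced ∧ q.f 0 = y ∧ q.f (t + 3) = z} :=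
    fun y z => finite_pt hfin _ y z
  have s3 := (Summable.tsum_add_tsum_compl (s := {u : {r : GPath G (t + 3) //
      (∀ i, 1 ≤ i → i + 2 ≤ t + 3 → r.f i ≠ r.f (i + 2)) ∧ r.f 0 = x ∧ r.f (t + 3) = x} |
        u.1.Reduced})
    (f := fun r => dartW G w (r.1.adj 0 (Nat.succ_pos (t + 2))) ^ k * r.1.wgt w)
    (.of_finite) (.of_finite)).symm
  -- step 4: the reduced part is cc (t+2) k
  have s4 : (∑' u : ↥{u : {r : GPath G (t + 3) //
      (∀ i, 1 ≤ i → i + 2 ≤ t + 3 → r.f i ≠ r.f (i + 2)) ∧ r.f 0 = x ∧ r.f (t + 3) = x} |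
        u.1.Reduced},
        dartW G w (u.1.1.adj 0 (Nat.succ_pos (t + 2))) ^ k * u.1.1.wgt w)
      = cc w (t + 2) k x := by
    rw [cc, ← Equiv.tsum_eq (E3 x t)
      (fun p => dartW G w (p.1.adj 0 (Nat.succ_pos (t + 2))) ^ k * p.1.wgt w)]
    exact tsum_congr fun u => rfl
  -- step 5: the non-reduced part via E4
  have s5 : (∑' u : ↥({u : {r : GPath G (t + 3) //
      (∀ i, 1 ≤ i → i + 2 ≤ t + 3 → r.f i ≠ r.f (i + 2)) ∧ r.f 0 = x ∧ r.f (t + 3) = x} |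
        u.1.Reduced}ᶜ),
        dartW G w (u.1.1.adj 0 (Nat.succ_pos (t + 2))) ^ k * u.1.1.wgt w)
      = ∑' b : (Σ x' : ↥(G.neighborSet x),
          {q : {q : GPath G (t + 1) // q.Reduced ∧ q.f 0 = x ∧ q.f (t + 1) = x} //
            q.1.f 1 ≠ x'.1}),
          dartW G w b.1.2 ^ (k + 1) * b.2.1.1.wgt w := by
    rw [← Equiv.tsum_eq (E4 x t).symm
      (fun u => dartW G w (u.1.1.adj 0 (Nat.succ_pos (t + 2))) ^ k * u.1.1.wgt w)]
    apply tsum_congr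
    rintro ⟨⟨x', hx'⟩, ⟨q, hred, hq0, hql⟩, hne⟩
    change q.f 1 ≠ x' at hne
    subst hq0
    show dartW G w ((GPath.cons (q.f 0) (GPath.cons x' q _) hx').adj 0
        (Nat.succ_pos (t + 2))) ^ k * (GPath.cons (q.f 0) (GPath.cons x' q _) hx').wgt w = _
    refine (congrArg (fun z => _ * z) ((GPath.wgt_cons w _ _ _).trans
      (congrArg (fun z => _ * z) (GPath.wgt_cons w _ _ _)))).trans ?_
    rw [pow_succ]
    show dartW G w (hx' : G.Adj (q.f 0) x') ^ k *
        (w ⟨(q.f 0, x'), hx'⟩ * (w ⟨(x', q.f 0), (hx' : G.Adj (q.f 0) x').symm⟩ * q.wgt w))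
      = dartW G w (hx' : G.Adj (q.f 0) x') ^ k * dartW G w (hx' : G.Adj (q.f 0) x') * q.wgt w
    unfold dartW
    ring
  -- step 6: evaluate over the sigma
  have s6 : (∑' b : (Σ x' : ↥(G.neighborSet x),
          {q : {q : GPath G (t + 1) // q.Reduced ∧ q.f 0 = x ∧ q.f (t + 1) = x} //
            q.1.f 1 ≠ x'.1}),
          dartW G w b.1.2 ^ (k + 1) * b.2.1.1.wgt w)
      = dd w (k + 1) x * aa w (t + 1) x x - cc w t (k + 1) x := by
    rw [Summable.tsum_sigma (.of_finite)]
    have inner : ∀ x' : ↥(G.neighborSet x),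
        (∑' q : {q : {q : GPath G (t + 1) // q.Reduced ∧ q.f 0 = x ∧ q.f (t + 1) = x} //
            q.1.f 1 ≠ x'.1}, dartW G w x'.2 ^ (k + 1) * q.1.1.wgt w)
        = dartW G w x'.2 ^ (k + 1) * aa w (t + 1) x x
          - ∑' q : ↥{q : {q : GPath G (t + 1) // q.Reduced ∧ q.f 0 = x ∧ q.f (t + 1) = x} |
              q.1.f 1 = x'.1}, dartW G w x'.2 ^ (k + 1) * q.1.1.wgt w := by
      intro x'
      have hsp := Summable.tsum_add_tsum_compl
        (s := {q : {q : GPath G (t + 1) // q.Reduced ∧ q.f 0 = x ∧ q.f (t + 1) = x} |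
            q.1.f 1 = x'.1})
        (f := fun q => dartW G w x'.2 ^ (k + 1) * q.1.wgt w) (.of_finite) (.of_finite)
      have htot : (∑' q : {q : GPath G (t + 1) // q.Reduced ∧ q.f 0 = x ∧ q.f (t + 1) = x},
          dartW G w x'.2 ^ (k + 1) * q.1.wgt w)
          = dartW G w x'.2 ^ (k + 1) * aa w (t + 1) x x := by
        rw [aa, tsum_mul_left]
      rw [htot] at hsp
      have hco : (∑' q : ↥({q : {q : GPath G (t + 1) // q.Reduced ∧ q.f 0 = x ∧ q.f (t + 1) = x} |
            q.1.f 1 = x'.1}ᶜ), dartW G w x'.2 ^ (k + 1) * q.1.1.wgt w)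
          = ∑' q : {q : {q : GPath G (t + 1) // q.Reduced ∧ q.f 0 = x ∧ q.f (t + 1) = x} //
            q.1.f 1 ≠ x'.1}, dartW G w x'.2 ^ (k + 1) * q.1.1.wgt w := rfl
      rw [hco] at hsp
      linarith
    calc (∑' (x' : ↥(G.neighborSet x)), ∑' q : {q : {q : GPath G (t + 1) //
            q.Reduced ∧ q.f 0 = x ∧ q.f (t + 1) = x} // q.1.f 1 ≠ x'.1},
            dartW G w x'.2 ^ (k + 1) * q.1.1.wgt w)
        = ∑' (x' : ↥(G.neighborSet x)), (dartW G w x'.2 ^ (k + 1) * aa w (t + 1) x x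
          - ∑' q : ↥{q : {q : GPath G (t + 1) // q.Reduced ∧ q.f 0 = x ∧ q.f (t + 1) = x} |
              q.1.f 1 = x'.1}, dartW G w x'.2 ^ (k + 1) * q.1.1.wgt w) := tsum_congr inner
      _ = (∑' (x' : ↥(G.neighborSet x)), dartW G w x'.2 ^ (k + 1) * aa w (t + 1) x x)
          - ∑' (x' : ↥(G.neighborSet x)),
            ∑' q : ↥{q : {q : GPath G (t + 1) // q.Reduced ∧ q.f 0 = x ∧ q.f (t + 1) = x} |
              q.1.f 1 = x'.1}, dartW G w x'.2 ^ (k + 1) * q.1.1.wgt w :=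
          Summable.tsum_sub (.of_finite) (.of_finite)
      _ = dd w (k + 1) x * aa w (t + 1) x x - cc w t (k + 1) x := by
          congr 1
          · rw [dd, ← tsum_mul_right]
          · have hsig := Summable.tsum_sigma (γ := fun x' : ↥(G.neighborSet x) =>
                ↥{q : {q : GPath G (t + 1) // q.Reduced ∧ q.f 0 = x ∧ q.f (t + 1) = x} |
                  q.1.f 1 = x'.1})
              (f := fun b => dartW G w b.1.2 ^ (k + 1) * b.2.1.1.wgt w) (.of_finite)
            rw [cc, ← hsig, ← Equiv.tsum_eq (E5 x t)
              (fun q => dartW G w (q.1.adj 0 (Nat.succ_pos t)) ^ (k + 1) * q.1.wgt w)]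
            apply tsum_congr
            rintro ⟨⟨x', hx'⟩, ⟨⟨q, hred, hq0, hql⟩, hq1⟩⟩
            change q.f 1 = x' at hq1
            subst hq1
            exact congrArg (· * q.wgt w)
              (congrArg (· ^ (k + 1)) (dartW_congr _ _ hq0.symm rfl))
  rw [s1, s2, s3, s4, s5, s6]

end Key2

section Summ

variable {G : SimpleGraph V} {w : G.Dart → ℝ}
variable (hw : ∀ e, 0 < w e) (hsum : Summable w) (hfin : ∀ x : V, (G.neighborSet x).Finite)
variable {M : ℝ} (hM : 0 < M) (hcard : ∀ x : V, ((G.neighborSet x).ncard : ℝ) ≤ M)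

include hw hfin in
theorem aa_le_FF (s : ℕ) (x y : V) : aa w s x y ≤ FF w s x := by
  haveI := finite_pall hfin s x
  haveI := finite_pt hfin s x y
  exact Summable.tsum_le_tsum_of_inj (fun p => ⟨p.1, p.2.2.1⟩)
    (fun p q h => Subtype.ext (by simpa using congrArg Subtype.val h))
    (fun c _ => GPath.wgt_nonneg hw c.1) (fun p => le_refl _) (.of_finite) (.of_finite)

include hw in
theorem aa_nonneg (s : ℕ) (x y : V) : 0 ≤ aa w s x y :=
  tsum_nonneg fun p => GPath.wgt_nonneg hw p.1

include hw in
theorem cc_nonneg (s k : ℕ) (x : V) : 0 ≤ cc w s k x :=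
  tsum_nonneg fun p => mul_nonneg (pow_nonneg (dartW_nonneg hw _) _) (GPath.wgt_nonneg hw p.1)

include hw in
theorem dd_nonneg (k : ℕ) (x : V) : 0 ≤ dd w k x :=
  tsum_nonneg fun x' => pow_nonneg (dartW_nonneg hw _) _

include hw hsum hfin hM hcard in
theorem summable_aa (s : ℕ) : Summable fun x : V => aa w (s + 1) x x := by
  apply Summable.of_nonneg_of_le (fun x => aa_nonneg hw _ x x)
    (f := fun x => (M * KK G w) ^ s * sg w x)
    (fun x => le_trans (aa_le_FF hw hfin (s + 1) x x) (FF_le_sg hw hsum hfin hM hcard s x))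
  exact (sg_summable hsum).mul_left _

include hw hsum hfin in
theorem cc_le (s k : ℕ) (x : V) : cc w s k x ≤ KK G w ^ (2 * k) * FF w (s + 1) x := by
  haveI := finite_pt hfin (s + 1) x x
  have h1 : cc w s k x ≤ KK G w ^ (2 * k) * aa w (s + 1) x x := by
    rw [aa, ← tsum_mul_left]
    apply Summable.tsum_le_tsum _ (.of_finite) (.of_finite)
    intro p
    apply mul_le_mul_of_nonneg_right _ (GPath.wgt_nonneg hw p.1)
    calc dartW G w (p.1.adj 0 (Nat.succ_pos s)) ^ k ≤ (KK G w ^ 2) ^ k :=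
          pow_le_pow_left₀ (dartW_nonneg hw _) (dartW_le hw hsum _) k
      _ = KK G w ^ (2 * k) := by rw [← pow_mul]
  exact le_trans h1 (mul_le_mul_of_nonneg_left (aa_le_FF hw hfin (s + 1) x x)
    (pow_nonneg (KK_pos).le _))

include hw hsum hfin hM hcard in
theorem summable_cc (s k : ℕ) : Summable fun x : V => cc w s k x := by
  apply Summable.of_nonneg_of_le (fun x => cc_nonneg hw s k x)
    (f := fun x => KK G w ^ (2 * k) * ((M * KK G w) ^ s * sg w x))
    (fun x => le_trans (cc_le hw hsum hfin s k x)
      (mul_le_mul_of_nonneg_left (FF_le_sg hw hsum hfin hM hcard s x)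
        (pow_nonneg (KK_pos).le _)))
  exact ((sg_summable hsum).mul_left _).mul_left _

include hw hsum hfin hcard in
theorem dd_le (k : ℕ) (x : V) : dd w k x ≤ M * KK G w ^ (2 * k) := by
  haveI : Fintype (G.neighborSet x) := (hfin x).fintype
  rw [dd, tsum_fintype]
  calc (∑ x' : G.neighborSet x, dartW G w x'.2 ^ k)
      ≤ ∑ _x' : G.neighborSet x, KK G w ^ (2 * k) := by
        apply Finset.sum_le_sum
        intro x' _
        calc dartW G w x'.2 ^ k ≤ (KK G w ^ 2) ^ k :=
              pow_le_pow_left₀ (dartW_nonneg hw _) (dartW_le hw hsum _) k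
          _ = KK G w ^ (2 * k) := by rw [← pow_mul]
    _ = (Fintype.card (G.neighborSet x) : ℝ) * KK G w ^ (2 * k) := by
        rw [Finset.sum_const, Finset.card_univ, nsmul_eq_mul]
    _ ≤ M * KK G w ^ (2 * k) := by
        apply mul_le_mul_of_nonneg_right _ (pow_nonneg (KK_pos).le _)
        have := hcard x
        rwa [Set.ncard_eq_toFinset_card', Set.toFinset_card] at this

include hw hsum hfin hM hcard in
theorem summable_ddaa (k s : ℕ) : Summable fun x : V => dd w k x * aa w (s + 1) x x := by
  apply Summable.of_nonneg_of_le
    (fun x => mul_nonneg (dd_nonneg hw k x) (aa_nonneg hw _ x x))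
    (f := fun x => M * KK G w ^ (2 * k) * ((M * KK G w) ^ s * sg w x))
    (fun x => mul_le_mul (dd_le hw hsum hfin hcard k x)
      (le_trans (aa_le_FF hw hfin (s + 1) x x) (FF_le_sg hw hsum hfin hM hcard s x))
      (aa_nonneg hw _ x x) (mul_nonneg hM.le (pow_nonneg (KK_pos).le _)))
  exact ((sg_summable hsum).mul_left _).mul_left _

end Summ

theorem sum_range_two_mul (n : ℕ) (f : ℕ → ℝ) :
    ∑ j ∈ Finset.range (2 * n), f j = ∑ l ∈ Finset.range n, (f (2 * l) + f (2 * l + 1)) := by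
  induction n with
  | zero => simp
  | succ n ih =>
    rw [Finset.sum_range_succ, ← ih, show 2 * (n + 1) = (2 * n + 1) + 1 by ring,
      Finset.sum_range_succ, Finset.sum_range_succ]
    ring

theorem bv_apply {ι : Type*} (i j : ι) :
    (bv i : lp (fun _ : ι => ℂ) 2) j = if j = i then 1 else 0 := by
  rw [bv, lp.single_apply]
  split_ifs with h
  · subst h; exact Pi.single_eq_same _ _
  · exact Pi.single_eq_of_ne h _

/-- the diagonal entry of `A (m+j) * B (2n-j)` at `x`, as a real number -/
noncomputable def Dr (G : SimpleGraph V) (w : G.Dart → ℝ) (m n j : ℕ) (x : V) : ℝ :=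
  if j = 2 * n then aa w (m + 2 * n) x x
  else if Even j then dd w (n - j / 2) x * aa w (m + j) x x
  else ∑' x' : ↥(G.neighborSet x),
    dartW G w x'.2 ^ (n - (j + 1) / 2) * w ⟨(x, x'.1), x'.2⟩ * aa w (m + j) x'.1 x

theorem statement_9' (G : SimpleGraph V)
    (M : ℝ) (hM : 0 < M)
    (hval : ∀ x : V, (G.neighborSet x).Finite ∧ ((G.neighborSet x).ncard : ℝ) ≤ M)
    (w : G.Dart → ℝ) (hw : ∀ e, 0 < w e) (hsum : Summable w)
    (A : ℕ → (lp (fun _ : V => ℂ) 2 →L[ℂ] lp (fun _ : V => ℂ) 2))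
    (hA0 : A 0 = 1)
    (hA : ∀ (m : ℕ) (x y : V), A m (bv x) y
      = ∑' p : {p : GPath G m // p.Reduced ∧ p.f 0 = x ∧ p.f m = y}, (GPath.wgt w p.1 : ℂ))
    (B : ℕ → (lp (fun _ : V => ℂ) 2 →L[ℂ] lp (fun _ : V => ℂ) 2))
    (hB0 : B 0 = 1)
    (hBev : ∀ (n : ℕ), 1 ≤ n → ∀ x y : V, B (2 * n) (bv x) y
      = if y = x then ((∑' x' : G.neighborSet x, dartW G w x'.2 ^ n : ℝ) : ℂ) else 0)
    (hBodd : ∀ (n : ℕ) (x y : V), B (2 * n + 1) (bv x) y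
      = if h : G.Adj x y then ((dartW G w h ^ n * w ⟨(x, y), h⟩ : ℝ) : ℂ) else 0)
    (C : ℕ → ℕ → (lp (fun _ : V => ℂ) 2 →L[ℂ] lp (fun _ : V => ℂ) 2))
    (hC : ∀ (m n : ℕ) (hm : 1 ≤ m) (hn : 1 ≤ n) (x y : V), C m n (bv x) y
      = ∑' p : {p : GPath G m // p.Reduced ∧ p.f 0 = x ∧ p.f m = y},
          ((dartW G w (p.1.adj 0 hm) ^ n * GPath.wgt w p.1 : ℝ) : ℂ))
    (m n : ℕ) (hm : 1 ≤ m) (hn : 1 ≤ n) :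
    DiagAbsSummable (C m n) ∧
    (∀ j ≤ 2 * n, DiagAbsSummable (A (m + j) * B (2 * n - j))) ∧
    diagTr (C m n)
      = ∑ j ∈ Finset.range (2 * n + 1), (-1 : ℂ) ^ j * diagTr (A (m + j) * B (2 * n - j)) := by
  obtain ⟨m0, rfl⟩ : ∃ m0, m = m0 + 1 := ⟨m - 1, by omega⟩
  have hfin : ∀ x : V, (G.neighborSet x).Finite := fun x => (hval x).1
  have hcard : ∀ x : V, ((G.neighborSet x).ncard : ℝ) ≤ M := fun x => (hval x).2
  -- entry values of A
  have hAval : ∀ (s : ℕ) (x y : V), A s (bv x) y = ((aa w s x y : ℝ) : ℂ) := by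
    intro s x y
    rw [hA s x y, ← Complex.ofReal_tsum]
    rfl
  -- entry values of C
  have hCval : ∀ x : V, C (m0 + 1) n (bv x) x = ((cc w m0 n x : ℝ) : ℂ) := by
    intro x
    rw [hC (m0 + 1) n hm hn x x, ← Complex.ofReal_tsum]
    rfl
  -- B (2k) (bv x) is a multiple of bv x
  have hBvec : ∀ (k : ℕ), 1 ≤ k → ∀ x : V,
      B (2 * k) (bv x) = ((dd w k x : ℝ) : ℂ) • bv x := by
    intro k hk x
    apply lp.ext
    funext y
    have h1 : (((dd w k x : ℝ) : ℂ) • bv x) y = ((dd w k x : ℝ) : ℂ) * (bv x) y := by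
      rw [lp.coeFn_smul, Pi.smul_apply, smul_eq_mul]
    rw [h1, hBev k hk x y, bv_apply]
    split_ifs with h
    · rw [mul_one]; rfl
    · rw [mul_zero]
  -- the diagonal entry of A s ∘ B (2k+1)
  have hodd : ∀ (k s : ℕ) (x : V), (A s) (B (2 * k + 1) (bv x)) x
      = ((∑' x' : ↥(G.neighborSet x),
          dartW G w x'.2 ^ k * w ⟨(x, x'.1), x'.2⟩ * aa w s x'.1 x : ℝ) : ℂ) := by
    intro k s x
    haveI : Fintype ↥(G.neighborSet x) := (hfin x).fintype
    have hvec : B (2 * k + 1) (bv x)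
        = ∑ x' : ↥(G.neighborSet x),
            ((dartW G w x'.2 ^ k * w ⟨(x, x'.1), x'.2⟩ : ℝ) : ℂ) • bv x'.1 := by
      apply lp.ext
      funext y
      rw [hBodd k x y, lp.coeFn_sum, Finset.sum_apply]
      have hterm : ∀ x' : ↥(G.neighborSet x),
          (((dartW G w x'.2 ^ k * w ⟨(x, x'.1), x'.2⟩ : ℝ) : ℂ) • bv x'.1) y
          = ((dartW G w x'.2 ^ k * w ⟨(x, x'.1), x'.2⟩ : ℝ) : ℂ)
            * (if y = x'.1 then 1 else 0) := by
        intro x'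
        rw [lp.coeFn_smul, Pi.smul_apply, smul_eq_mul, bv_apply]
      rw [Finset.sum_congr rfl fun x' _ => hterm x']
      by_cases hadj : G.Adj x y
      · rw [dif_pos hadj, Finset.sum_eq_single (⟨y, hadj⟩ : ↥(G.neighborSet x))]
        · rw [if_pos rfl, mul_one]
        · intro b _ hb
          rw [if_neg fun e => hb (Subtype.ext e.symm), mul_zero]
        · intro habs
          exact absurd (Finset.mem_univ _) habs
      · rw [dif_neg hadj]
        symm
        apply Finset.sum_eq_zero
        intro b _
        rw [if_neg fun e => hadj (by rw [e]; exact b.2), mul_zero]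
    rw [hvec, map_sum, lp.coeFn_sum, Finset.sum_apply]
    have hterm2 : ∀ x' : ↥(G.neighborSet x),
        (A s (((dartW G w x'.2 ^ k * w ⟨(x, x'.1), x'.2⟩ : ℝ) : ℂ) • bv x'.1)) x
        = ((dartW G w x'.2 ^ k * w ⟨(x, x'.1), x'.2⟩ * aa w s x'.1 x : ℝ) : ℂ) := by
      intro x'
      rw [map_smul, lp.coeFn_smul, Pi.smul_apply, smul_eq_mul, hAval]
      push_cast
      ring
    rw [Finset.sum_congr rfl fun x' _ => hterm2 x', tsum_fintype]
    push_cast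
    rfl
  -- the diagonal entries
  have hDiag : ∀ j ≤ 2 * n, ∀ x : V,
      (A (m0 + 1 + j) * B (2 * n - j)) (bv x) x = ((Dr G w (m0 + 1) n j x : ℝ) : ℂ) := by
    intro j hj x
    rcases eq_or_lt_of_le hj with rfl | hjlt
    · rw [Dr, if_pos rfl, ContinuousLinearMap.mul_apply, Nat.sub_self, hB0,
        ContinuousLinearMap.one_apply, hAval]
    · by_cases hpar : Even j
      · have hk : 2 * n - j = 2 * (n - j / 2) := by
          obtain ⟨l, rfl⟩ := hpar; omega
        have hk1 : 1 ≤ n - j / 2 := by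
          obtain ⟨l, rfl⟩ := hpar; omega
        rw [Dr, if_neg (by omega), if_pos hpar, ContinuousLinearMap.mul_apply, hk,
          hBvec _ hk1 x, map_smul, lp.coeFn_smul, Pi.smul_apply, smul_eq_mul, hAval]
        push_cast
        ring
      · have hk : 2 * n - j = 2 * (n - (j + 1) / 2) + 1 := by
          rcases Nat.even_or_odd j with he | ho
          · exact absurd he hpar
          · obtain ⟨l, rfl⟩ := ho; omega
        rw [Dr, if_neg (by omega), if_neg hpar, ContinuousLinearMap.mul_apply, hk,
          hodd _ (m0 + 1 + j) x]
  -- key identity, specialized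
  have hkey : ∀ l, l < n → ∀ x : V, Dr G w (m0 + 1) n (2 * l + 1) x
      = cc w (m0 + 2 * l + 2) (n - l - 1) x
        + (dd w (n - l) x * aa w (m0 + 2 * l + 1) x x - cc w (m0 + 2 * l) (n - l) x) := by
    intro l hl x
    rw [Dr, if_neg (by omega), if_neg (by simp [Nat.even_add_one, parity_simps]),
      show n - (2 * l + 1 + 1) / 2 = n - l - 1 from by omega,
      show m0 + 1 + (2 * l + 1) = m0 + 2 * l + 2 from by omega,
      key hfin (m0 + 2 * l) (n - l - 1) x,
      show n - l - 1 + 1 = n - l from by omega]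
  -- summability of each diagonal
  have hS : ∀ j ≤ 2 * n, Summable fun x : V => Dr G w (m0 + 1) n j x := by
    intro j hj
    rcases eq_or_lt_of_le hj with rfl | hjlt
    · apply (summable_aa hw hsum hfin hM hcard (m0 + 2 * n)).congr
      intro x
      rw [Dr, if_pos rfl, show m0 + 1 + 2 * n = m0 + 2 * n + 1 from by omega]
    · by_cases hpar : Even j
      · apply (summable_ddaa hw hsum hfin hM hcard (n - j / 2) (m0 + j)).congr
        intro x
        rw [Dr, if_neg (by omega), if_pos hpar, show m0 + 1 + j = m0 + j + 1 from by omega]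
      · obtain ⟨l, rfl⟩ : ∃ l, j = 2 * l + 1 := by
          rcases Nat.even_or_odd j with he | ho
          · exact absurd he hpar
          · obtain ⟨l, hl⟩ := ho; exact ⟨l, hl⟩
        have hl : l < n := by omega
        apply Summable.congr _ fun x => (hkey l hl x).symm
        exact ((summable_cc hw hsum hfin hM hcard (m0 + 2 * l + 2) (n - l - 1)).add
          ((summable_ddaa hw hsum hfin hM hcard (n - l) (m0 + 2 * l)).sub
            (summable_cc hw hsum hfin hM hcard (m0 + 2 * l) (n - l))))
  -- pointwise telescoping identity
  have hptwise : ∀ x : V,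
      ∑ j ∈ Finset.range (2 * n + 1), (-1 : ℝ) ^ j * Dr G w (m0 + 1) n j x
      = cc w m0 n x := by
    intro x
    rw [Finset.sum_range_succ,
      sum_range_two_mul n (fun j => (-1 : ℝ) ^ j * Dr G w (m0 + 1) n j x)]
    have hpair : ∀ l ∈ Finset.range n,
        ((-1 : ℝ) ^ (2 * l) * Dr G w (m0 + 1) n (2 * l) x
          + (-1 : ℝ) ^ (2 * l + 1) * Dr G w (m0 + 1) n (2 * l + 1) x)
        = (fun i => cc w (m0 + 2 * i) (n - i) x) l
          - (fun i => cc w (m0 + 2 * i) (n - i) x) (l + 1) := by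
      intro l hl
      rw [Finset.mem_range] at hl
      have h1 : (-1 : ℝ) ^ (2 * l) = 1 := by rw [pow_mul]; norm_num
      have h2 : (-1 : ℝ) ^ (2 * l + 1) = -1 := by rw [pow_succ, h1, one_mul]
      have hDe : Dr G w (m0 + 1) n (2 * l) x
          = dd w (n - l) x * aa w (m0 + 2 * l + 1) x x := by
        rw [Dr, if_neg (by omega), if_pos (even_two_mul l),
          show 2 * l / 2 = l from by omega,
          show m0 + 1 + 2 * l = m0 + 2 * l + 1 from by omega]
      rw [h1, h2, hDe, hkey l hl x]
      show _ = cc w (m0 + 2 * l) (n - l) x - cc w (m0 + 2 * (l + 1)) (n - (l + 1)) x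
      rw [show m0 + 2 * (l + 1) = m0 + 2 * l + 2 from by omega,
        show n - (l + 1) = n - l - 1 from by omega]
      ring
    rw [Finset.sum_congr rfl hpair,
      Finset.sum_range_sub' (f := fun i => cc w (m0 + 2 * i) (n - i) x)]
    have hf0 : cc w (m0 + 2 * 0) (n - 0) x = cc w m0 n x := by norm_num
    have hfn : cc w (m0 + 2 * n) (n - n) x = aa w (m0 + 1 + 2 * n) x x := by
      rw [Nat.sub_self, cc_zero, show m0 + 2 * n + 1 = m0 + 1 + 2 * n from by omega]
    have hDl : Dr G w (m0 + 1) n (2 * n) x = aa w (m0 + 1 + 2 * n) x x := by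
      rw [Dr, if_pos rfl]
    have h1 : (-1 : ℝ) ^ (2 * n) = 1 := by rw [pow_mul]; norm_num
    rw [hf0, hfn, hDl, h1]
    ring
  refine ⟨?_, ?_, ?_⟩
  · exact ((summable_cc hw hsum hfin hM hcard m0 n).abs).congr fun x => by
      rw [hCval x, Complex.norm_real, Real.norm_eq_abs]
  · intro j hj
    exact ((hS j hj).abs).congr fun x => by
      rw [hDiag j hj x, Complex.norm_real, Real.norm_eq_abs]
  · have hAB : ∀ j ∈ Finset.range (2 * n + 1),
        (-1 : ℂ) ^ j * diagTr (A (m0 + 1 + j) * B (2 * n - j))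
        = (((-1 : ℝ) ^ j * ∑' x, Dr G w (m0 + 1) n j x : ℝ) : ℂ) := by
      intro j hj
      have hj' : j ≤ 2 * n := by rw [Finset.mem_range] at hj; omega
      rw [diagTr, tsum_congr (hDiag j hj'), ← Complex.ofReal_tsum]
      push_cast
      ring
    rw [Finset.sum_congr rfl hAB]
    have hC2 : diagTr (C (m0 + 1) n) = ((∑' x, cc w m0 n x : ℝ) : ℂ) := by
      rw [diagTr, tsum_congr hCval, ← Complex.ofReal_tsum]
    rw [hC2]
    have hfinal : ∑ j ∈ Finset.range (2 * n + 1), (-1 : ℝ) ^ j * ∑' x, Dr G w (m0 + 1) n j x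
        = ∑' x, cc w m0 n x := by
      have h1 : ∀ j ∈ Finset.range (2 * n + 1),
          (-1 : ℝ) ^ j * ∑' x, Dr G w (m0 + 1) n j x
          = ∑' x, (-1 : ℝ) ^ j * Dr G w (m0 + 1) n j x := fun j hj => tsum_mul_left.symm
      rw [Finset.sum_congr rfl h1, ← Summable.tsum_finsetSum]
      · exact tsum_congr hptwise
      · intro j hj
        exact (hS j (by rw [Finset.mem_range] at hj; omega)).mul_left _
    rw [← hfinal]
    push_cast
    rfl

/-- For all `m, n ≥ 1`:
`tr C_{m,n} = Σ_{j=0}^{2n} (−1)ʲ tr(A_{m+j} B_{2n−j})`, all operators involved having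
absolutely summable diagonals. -/
theorem statement_9 (G : SimpleGraph V) (hconn : G.Connected)
    (M : ℝ) (hM : 0 < M)
    (hval : ∀ x : V, (G.neighborSet x).Finite ∧ ((G.neighborSet x).ncard : ℝ) ≤ M)
    (w : G.Dart → ℝ) (hw : ∀ e, 0 < w e) (hsum : Summable w)
    (A : ℕ → (lp (fun _ : V => ℂ) 2 →L[ℂ] lp (fun _ : V => ℂ) 2))
    (hA0 : A 0 = 1)
    (hA : ∀ (m : ℕ) (x y : V), A m (bv x) y
      = ∑' p : {p : GPath G m // p.Reduced ∧ p.f 0 = x ∧ p.f m = y}, (GPath.wgt w p.1 : ℂ))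
    (B : ℕ → (lp (fun _ : V => ℂ) 2 →L[ℂ] lp (fun _ : V => ℂ) 2))
    (hB0 : B 0 = 1)
    (hBev : ∀ (n : ℕ), 1 ≤ n → ∀ x y : V, B (2 * n) (bv x) y
      = if y = x then ((∑' x' : G.neighborSet x, dartW G w x'.2 ^ n : ℝ) : ℂ) else 0)
    (hBodd : ∀ (n : ℕ) (x y : V), B (2 * n + 1) (bv x) y
      = if h : G.Adj x y then ((dartW G w h ^ n * w ⟨(x, y), h⟩ : ℝ) : ℂ) else 0)
    (C : ℕ → ℕ → (lp (fun _ : V => ℂ) 2 →L[ℂ] lp (fun _ : V => ℂ) 2))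
    (hC : ∀ (m n : ℕ) (hm : 1 ≤ m) (hn : 1 ≤ n) (x y : V), C m n (bv x) y
      = ∑' p : {p : GPath G m // p.Reduced ∧ p.f 0 = x ∧ p.f m = y},
          ((dartW G w (p.1.adj 0 hm) ^ n * GPath.wgt w p.1 : ℝ) : ℂ))
    (m n : ℕ) (hm : 1 ≤ m) (hn : 1 ≤ n) :
    DiagAbsSummable (C m n) ∧
    (∀ j ≤ 2 * n, DiagAbsSummable (A (m + j) * B (2 * n - j))) ∧
    diagTr (C m n)
      = ∑ j ∈ Finset.range (2 * n + 1), (-1 : ℂ) ^ j * diagTr (A (m + j) * B (2 * n - j)) := by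
  exact statement_9' G M hM hval w hw hsum A hA0 hA B hB0 hBev hBodd C hC m n hm hn
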